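/- arXiv:1802.02131 — 2 statements merged into one kernel-verified Lean document; each statement's English description precedes it below -/
import Mathlib

section
/- Let X₁ and X₂ be independent random variables with pmfs p_{X₁}, p_{X₂} on finite alphabets 𝒳₁, 𝒳₂. For j = 1,2, let X_j be randomly binned into W_j = B₁^{(j)}(X_j) ∈ [1:W̃_j] and F_j = B₂^{(j)}(X_j) ∈ [1:F̃_j] by a uniform random binning, with the binnings for j = 1 and j = 2 independent. For γ_j > 0 let D_{γ_j} = {x ∈ 𝒳_j : log(1/p_{X_j}(x)) > γ_j}. Then the expectation over the random binning of the total variation distance between the induced pmf P_{W₁W₂F₁F₂} and the uniform pmf on [1:W̃₁]×[1:W̃₂]×[1:F̃₁]×[1:F̃₂] is at most Σ_{j=1,2} ( P(X_j ∉ D_{γ_j}) + (1/2)·√(W̃_j·F̃_j·2^{−γ_j}) ). -/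
open Finset Real Filter

attribute [local instance] Classical.propDecidable

/-- `p` is a probability mass function on the finite type `α`. -/
def IsPMF {α : Type*} [Fintype α] (p : α → ℝ) : Prop :=
  (∀ a, 0 ≤ p a) ∧ ∑ a, p a = 1

/-- Shannon entropy (base-2) of the random variable `f` under the pmf `p`
(i.e. the entropy of the push-forward of `p` along `f`). -/
noncomputable def HOf {α β : Type*} [Fintype α] (p : α → ℝ) (f : α → β) : ℝ :=
  -∑ b ∈ Finset.univ.image f,
      (∑ a ∈ Finset.univ.filter (fun a => f a = b), p a) *
        Real.logb 2 (∑ a ∈ Finset.univ.filter (fun a => f a = b), p a)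

/-- Conditional entropy `H(f | g)` under the pmf `p`. -/
noncomputable def condHOf {α β γ : Type*} [Fintype α] (p : α → ℝ) (f : α → β) (g : α → γ) : ℝ :=
  HOf p (fun a => (f a, g a)) - HOf p g

/-- Mutual information `I(f; g)` under the pmf `p`. -/
noncomputable def miOf {α β γ : Type*} [Fintype α] (p : α → ℝ) (f : α → β) (g : α → γ) : ℝ :=
  HOf p f + HOf p g - HOf p (fun a => (f a, g a))

/-- Conditional mutual information `I(f; g | h)` under the pmf `p`. -/
noncomputable def cmiOf {α β γ δ : Type*} [Fintype α] (p : α → ℝ) (f : α → β) (g : α → γ)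
    (h : α → δ) : ℝ :=
  HOf p (fun a => (f a, h a)) + HOf p (fun a => (g a, h a))
    - HOf p (fun a => (f a, g a, h a)) - HOf p h

/-- Total variation distance between two pmfs on a finite type. -/
noncomputable def tvDist {α : Type*} [Fintype α] (p q : α → ℝ) : ℝ :=
  (1 / 2) * ∑ a, |p a - q a|

section aux

lemma rb_sum_eval {ι A : Type*} [Fintype ι] [Fintype A] [DecidableEq ι] (i : ι) (g : A → ℝ) :
    ∑ b : ι → A, g (b i)
      = (Fintype.card A : ℝ) ^ (Fintype.card ι - 1) * ∑ a, g a := by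
  classical
  have h := Equiv.sum_comp (Equiv.funSplitAt i A) (fun y : A × ({j // j ≠ i} → A) => g y.1)
  simp only [Equiv.funSplitAt_apply] at h
  rw [h, Fintype.sum_prod_type]
  simp [Finset.sum_const, Fintype.card_fun, Fintype.card_subtype_compl, Finset.sum_mul, mul_comm]

lemma rb_sum_eval2 {ι A : Type*} [Fintype ι] [Fintype A] [DecidableEq ι] {i j : ι} (hij : j ≠ i)
    (g h : A → ℝ) :
    ∑ b : ι → A, g (b i) * h (b j)
      = (Fintype.card A : ℝ) ^ (Fintype.card ι - 2) * ((∑ a, g a) * (∑ a, h a)) := by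
  classical
  have h1 := Equiv.sum_comp (Equiv.funSplitAt i A)
    (fun y : A × ({k // k ≠ i} → A) => g y.1 * h (y.2 ⟨j, hij⟩))
  simp only [Equiv.funSplitAt_apply] at h1
  rw [h1, Fintype.sum_prod_type]
  have h2 := rb_sum_eval (A := A) (⟨j, hij⟩ : {k // k ≠ i}) h
  have hc : Fintype.card {k // k ≠ i} - 1 = Fintype.card ι - 2 := by
    simp [Fintype.card_subtype_compl]
    omega
  calc ∑ x : A, ∑ y : { j // j ≠ i } → A, g (x, y).1 * h ((x, y).2 ⟨j, hij⟩)
      = ∑ x : A, g x * ∑ y : { j // j ≠ i } → A, h (y ⟨j, hij⟩) := by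
        simp [Finset.mul_sum]
    _ = (∑ x : A, g x) * (↑(Fintype.card A) ^ (Fintype.card ι - 2) * ∑ a : A, h a) := by
        rw [← Finset.sum_mul, h2, hc]
    _ = _ := by ring

lemma rb_one_source {X A : Type*} [Fintype X] [Fintype A] [DecidableEq X] [DecidableEq A]
    [Nonempty A]
    (p : X → ℝ) (hp0 : ∀ x, 0 ≤ p x) (hp1 : ∑ x, p x = 1)
    (γ : ℝ) (hγ2 : (0:ℝ) < (2:ℝ) ^ (-γ))
    (Pred : X → Prop) [DecidablePred Pred]
    (hD : ∀ x, Pred x → p x ≤ (2:ℝ) ^ (-γ)) :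
    (1 / (Fintype.card (X → A) : ℝ)) * ∑ b : X → A,
        tvDist (fun a => ∑ x ∈ Finset.univ.filter (fun x => b x = a), p x)
          (fun _ : A => 1 / (Fintype.card A : ℝ))
      ≤ (∑ x ∈ Finset.univ.filter (fun x => ¬ Pred x), p x)
        + (1 / 2) * Real.sqrt ((Fintype.card A : ℝ) * (2:ℝ) ^ (-γ)) := by
  classical
  set N := Fintype.card A with hNdef
  set M := Fintype.card (X → A) with hMdef
  have hN0 : (0:ℝ) < N := by exact_mod_cast Fintype.card_pos
  have hM0 : (0:ℝ) < M := by exact_mod_cast Fintype.card_pos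
  set D : Finset X := Finset.univ.filter Pred with hDdef
  set ν : ℝ := ∑ x ∈ Finset.univ.filter (fun x => ¬ Pred x), p x with hνdef
  have hν0 : 0 ≤ ν := Finset.sum_nonneg fun x _ => hp0 x
  set Y : A → A → ℝ := fun a c => (if c = a then (1:ℝ) else 0) - 1/N with hYdef
  set Z : (X → A) → A → ℝ := fun b a => ∑ x ∈ D, p x * Y a (b x) with hZdef
  have hYsum : ∀ a, ∑ c, Y a c = 0 := by
    intro a
    simp only [hYdef, Finset.sum_sub_distrib, Finset.sum_ite_eq', Finset.mem_univ, if_true,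
      Finset.sum_const, Finset.card_univ, nsmul_eq_mul]
    field_simp
    simp [hNdef]
  have hYsq0 : ∀ a, 0 ≤ ∑ c, Y a c * Y a c :=
    fun a => Finset.sum_nonneg fun c _ => mul_self_nonneg _
  have hYsq : ∀ a, ∑ c, Y a c * Y a c ≤ 1 := by
    intro a
    have hterm : ∀ c, Y a c * Y a c
        = (if c = a then (1 - 2/(N:ℝ)) else 0) + 1/(N:ℝ)^2 := by
      intro c
      by_cases h : c = a <;> simp [hYdef, h] <;> ring
    rw [Finset.sum_congr rfl fun c _ => hterm c]
    simp only [Finset.sum_add_distrib, Finset.sum_ite_eq', Finset.mem_univ, if_true,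
      Finset.sum_const, Finset.card_univ, nsmul_eq_mul]
    have hNN : (N:ℝ) * (1/(N:ℝ)^2) = 1/N := by field_simp
    rw [hNN]
    have h1N : (1:ℝ)/N ≤ 2/N := by gcongr <;> norm_num
    linarith
  -- Step 1 : pointwise bound on the tv distance
  have step1 : ∀ b : X → A,
      tvDist (fun a => ∑ x ∈ Finset.univ.filter (fun x => b x = a), p x)
        (fun _ : A => 1 / (N : ℝ)) ≤ ν + (1/2) * ∑ a, |Z b a| := by
    intro b
    have hμν : (∑ x ∈ D, p x) + ν = 1 := by
      rw [hDdef, hνdef, Finset.sum_filter_add_sum_filter_not, hp1]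
    have key : ∀ a, |(∑ x ∈ Finset.univ.filter (fun x => b x = a), p x) - 1/(N:ℝ)|
        ≤ |Z b a| + (∑ x ∈ Finset.univ.filter (fun x => ¬ Pred x),
            if b x = a then p x else 0) + ν/N := by
      intro a
      set R : ℝ := ∑ x ∈ Finset.univ.filter (fun x => ¬ Pred x),
        if b x = a then p x else 0 with hRdef
      have hR0 : 0 ≤ R := Finset.sum_nonneg fun x _ => by
        by_cases h : b x = a <;> simp [h, hp0 x]
      have hνN : 0 ≤ ν/(N:ℝ) := div_nonneg hν0 hN0.le
      have hsplit : (∑ x ∈ Finset.univ.filter (fun x => b x = a), p x)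
          = (∑ x ∈ D, if b x = a then p x else 0) + R := by
        rw [Finset.sum_filter, hDdef, hRdef, ← Finset.sum_filter_add_sum_filter_not
          Finset.univ Pred (fun x => if b x = a then p x else 0)]
      have hterm : ∀ x, p x * Y a (b x) = (if b x = a then p x else 0) - p x / N := by
        intro x
        by_cases h : b x = a <;> simp [hYdef, h] <;> ring
      have hZa : Z b a = (∑ x ∈ D, if b x = a then p x else 0) - (∑ x ∈ D, p x)/N := by
        simp only [hZdef]
        rw [Finset.sum_congr rfl fun x _ => hterm x, Finset.sum_sub_distrib, Finset.sum_div]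
      have h1N : (1:ℝ)/N = (∑ x ∈ D, p x)/N + ν/N := by
        rw [← add_div, hμν]
      have h1 : (∑ x ∈ Finset.univ.filter (fun x => b x = a), p x) - 1/(N:ℝ)
          = Z b a + (R - ν/N) := by
        rw [hsplit, hZa, h1N]; ring
      rw [h1]
      have h2 := abs_add_le (Z b a) (R - ν/N)
      have h3 : |R - ν/(N:ℝ)| ≤ R + ν/N := by
        rw [abs_sub_le_iff]; constructor <;> linarith
      linarith
    have hRsum : ∑ a : A, (∑ x ∈ Finset.univ.filter (fun x => ¬ Pred x),
        if b x = a then p x else 0) = ν := by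
      rw [Finset.sum_comm]
      rw [hνdef]
      apply Finset.sum_congr rfl
      intro x _
      simp [Finset.sum_ite_eq]
    have hνsum : ∑ _a : A, ν/(N:ℝ) = ν := by
      rw [Finset.sum_const, Finset.card_univ, nsmul_eq_mul, ← hNdef]
      field_simp
    have hsum := Finset.sum_le_sum (fun a (_ : a ∈ Finset.univ) => key a)
    rw [Finset.sum_add_distrib, Finset.sum_add_distrib, hRsum, hνsum] at hsum
    simp only [tvDist]
    linarith
  -- Step 3 : second moment bound
  have step3 : ∀ a, ∑ b : X → A, (Z b a)^2 ≤ (M:ℝ)/N * (2:ℝ)^(-γ) := by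
    intro a
    have hexp : ∑ b : X → A, (Z b a)^2
        = ∑ x ∈ D, ∑ y ∈ D, p x * p y * ∑ b : X → A, Y a (b x) * Y a (b y) := by
      calc ∑ b : X → A, (Z b a)^2
          = ∑ b : X → A, ∑ x ∈ D, ∑ y ∈ D, (p x * Y a (b x)) * (p y * Y a (b y)) := by
            apply Finset.sum_congr rfl
            intro b _
            simp only [hZdef]
            rw [pow_two, Finset.sum_mul_sum]
        _ = ∑ x ∈ D, ∑ y ∈ D, ∑ b : X → A, (p x * Y a (b x)) * (p y * Y a (b y)) := by
            rw [Finset.sum_comm]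
            apply Finset.sum_congr rfl
            intro x _
            rw [Finset.sum_comm]
        _ = _ := by
            apply Finset.sum_congr rfl; intro x _
            apply Finset.sum_congr rfl; intro y _
            rw [Finset.mul_sum]
            apply Finset.sum_congr rfl; intro b _
            ring
    rw [hexp]
    rcases D.eq_empty_or_nonempty with hDe | ⟨x0, hx0⟩
    · rw [hDe]
      simp
      positivity
    · have hXne : Nonempty X := ⟨x0⟩
      have hn1 : 1 ≤ Fintype.card X := Fintype.card_pos
      have hMN : (N:ℝ) ^ (Fintype.card X - 1) = (M:ℝ)/N := by
        rw [hMdef, Fintype.card_fun, ← hNdef]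
        push_cast
        rw [eq_div_iff hN0.ne', ← pow_succ]
        congr 1
        omega
      have hred : ∑ x ∈ D, ∑ y ∈ D, p x * p y * ∑ b : X → A, Y a (b x) * Y a (b y)
          = ∑ x ∈ D, p x * p x * ((M:ℝ)/N * ∑ c, Y a c * Y a c) := by
        apply Finset.sum_congr rfl
        intro x hx
        rw [Finset.sum_eq_single_of_mem x hx]
        · rw [rb_sum_eval x (fun c => Y a c * Y a c), hMN]
        · intro y _ hyx
          rw [rb_sum_eval2 hyx (Y a) (Y a), hYsum a]
          ring
      rw [hred]
      have hCpos : 0 ≤ (M:ℝ)/N * ∑ c, Y a c * Y a c := by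
        apply mul_nonneg (by positivity) (hYsq0 a)
      calc ∑ x ∈ D, p x * p x * ((M:ℝ)/N * ∑ c, Y a c * Y a c)
          ≤ ∑ x ∈ D, (2:ℝ)^(-γ) * p x * ((M:ℝ)/N * 1) := by
            apply Finset.sum_le_sum
            intro x hx
            have hx' : Pred x := by
              rw [hDdef] at hx; exact (Finset.mem_filter.mp hx).2
            have h1 : p x * p x ≤ (2:ℝ)^(-γ) * p x :=
              mul_le_mul_of_nonneg_right (hD x hx') (hp0 x)
            have h2 : (M:ℝ)/N * ∑ c, Y a c * Y a c ≤ (M:ℝ)/N * 1 :=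
              mul_le_mul_of_nonneg_left (hYsq a) (by positivity)
            calc p x * p x * ((M:ℝ)/N * ∑ c, Y a c * Y a c)
                ≤ ((2:ℝ)^(-γ) * p x) * ((M:ℝ)/N * ∑ c, Y a c * Y a c) :=
                  mul_le_mul_of_nonneg_right h1 hCpos
              _ ≤ ((2:ℝ)^(-γ) * p x) * ((M:ℝ)/N * 1) := by
                  apply mul_le_mul_of_nonneg_left h2
                  exact mul_nonneg hγ2.le (hp0 x)
        _ = (2:ℝ)^(-γ) * (M:ℝ)/N * ∑ x ∈ D, p x := by
            rw [Finset.mul_sum]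
            apply Finset.sum_congr rfl
            intro x _
            ring
        _ ≤ (2:ℝ)^(-γ) * (M:ℝ)/N * 1 := by
            apply mul_le_mul_of_nonneg_left ?_ (by positivity)
            rw [← hp1]
            exact Finset.sum_le_univ_sum_of_nonneg hp0
        _ = (M:ℝ)/N * (2:ℝ)^(-γ) := by ring
  -- Step 4 : Cauchy-Schwarz
  have step4 : ∀ a : A, (1/(M:ℝ)) * ∑ b : X → A, |Z b a| ≤ Real.sqrt ((2:ℝ)^(-γ)/N) := by
    intro a
    apply Real.le_sqrt_of_sq_le
    have hcs := sq_sum_le_card_mul_sum_sq (s := (Finset.univ : Finset (X → A)))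
      (f := fun b => |Z b a|)
    simp only [sq_abs, Finset.card_univ, ← hMdef] at hcs
    have h2 : (∑ b : X → A, |Z b a|)^2 ≤ (M:ℝ)^2 * ((2:ℝ)^(-γ)/N) := by
      calc (∑ b : X → A, |Z b a|)^2 ≤ (M:ℝ) * ∑ b : X → A, (Z b a)^2 := hcs
        _ ≤ (M:ℝ) * ((M:ℝ)/N * (2:ℝ)^(-γ)) :=
            mul_le_mul_of_nonneg_left (step3 a) hM0.le
        _ = (M:ℝ)^2 * ((2:ℝ)^(-γ)/N) := by field_simp
    calc ((1/(M:ℝ)) * ∑ b : X → A, |Z b a|)^2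
        = (1/(M:ℝ))^2 * (∑ b : X → A, |Z b a|)^2 := by ring
      _ ≤ (1/(M:ℝ))^2 * ((M:ℝ)^2 * ((2:ℝ)^(-γ)/N)) := by
          apply mul_le_mul_of_nonneg_left h2 (by positivity)
      _ = (2:ℝ)^(-γ)/N := by field_simp
  -- assemble
  have hsqrtid : (N:ℝ) * Real.sqrt ((2:ℝ)^(-γ)/N) = Real.sqrt ((N:ℝ) * (2:ℝ)^(-γ)) := by
    have h : (N:ℝ) * (2:ℝ)^(-γ) = (N:ℝ)^2 * ((2:ℝ)^(-γ)/N) := by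
      field_simp
    rw [h, Real.sqrt_mul (by positivity), Real.sqrt_sq hN0.le]
  calc (1 / (M : ℝ)) * ∑ b : X → A,
        tvDist (fun a => ∑ x ∈ Finset.univ.filter (fun x => b x = a), p x)
          (fun _ : A => 1 / (N : ℝ))
      ≤ (1 / (M:ℝ)) * ∑ b : X → A, (ν + (1/2) * ∑ a, |Z b a|) := by
        apply mul_le_mul_of_nonneg_left (Finset.sum_le_sum fun b _ => step1 b) (by positivity)
    _ = ν + (1/2) * ∑ a : A, ((1/(M:ℝ)) * ∑ b : X → A, |Z b a|) := by
        rw [Finset.sum_add_distrib, Finset.sum_const, Finset.card_univ, ← hMdef,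
          nsmul_eq_mul, ← Finset.mul_sum, Finset.sum_comm]
        rw [mul_add]
        congr 1
        · field_simp
        · rw [Finset.mul_sum, Finset.mul_sum]
          rw [Finset.mul_sum]
          apply Finset.sum_congr rfl
          intro a _
          ring
    _ ≤ ν + (1/2) * ∑ _a : A, Real.sqrt ((2:ℝ)^(-γ)/N) := by
        have := Finset.sum_le_sum (fun a (_ : a ∈ Finset.univ) => step4 a)
        nlinarith [this]
    _ = ν + (1/2) * ((N:ℝ) * Real.sqrt ((2:ℝ)^(-γ)/N)) := by
        rw [Finset.sum_const, Finset.card_univ, nsmul_eq_mul, ← hNdef]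
    _ = ν + (1/2) * Real.sqrt ((N:ℝ) * (2:ℝ)^(-γ)) := by rw [hsqrtid]

lemma rb_tv_prod {A B : Type*} [Fintype A] [Fintype B] (p q : A → ℝ) (r s : B → ℝ)
    (hr0 : ∀ b, 0 ≤ r b) (hr1 : ∑ b, r b = 1) (hq0 : ∀ a, 0 ≤ q a) (hq1 : ∑ a, q a = 1) :
    tvDist (fun ab : A × B => p ab.1 * r ab.2) (fun ab : A × B => q ab.1 * s ab.2)
      ≤ tvDist p q + tvDist r s := by
  simp only [tvDist]
  have key : ∀ ab : A × B, |p ab.1 * r ab.2 - q ab.1 * s ab.2|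
      ≤ |p ab.1 - q ab.1| * r ab.2 + q ab.1 * |r ab.2 - s ab.2| := by
    intro ab
    have h1 : p ab.1 * r ab.2 - q ab.1 * s ab.2
        = (p ab.1 - q ab.1) * r ab.2 + q ab.1 * (r ab.2 - s ab.2) := by ring
    rw [h1]
    calc |(p ab.1 - q ab.1) * r ab.2 + q ab.1 * (r ab.2 - s ab.2)|
        ≤ |(p ab.1 - q ab.1) * r ab.2| + |q ab.1 * (r ab.2 - s ab.2)| := abs_add_le _ _
      _ = |p ab.1 - q ab.1| * r ab.2 + q ab.1 * |r ab.2 - s ab.2| := by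
          rw [abs_mul, abs_mul, abs_of_nonneg (hr0 ab.2), abs_of_nonneg (hq0 ab.1)]
  have hsum := Finset.sum_le_sum (fun ab (_ : ab ∈ Finset.univ) => key ab)
  have hEq : ∑ ab : A × B, (|p ab.1 - q ab.1| * r ab.2 + q ab.1 * |r ab.2 - s ab.2|)
      = (∑ a, |p a - q a|) + ∑ b, |r b - s b| := by
    rw [Finset.sum_add_distrib, Fintype.sum_prod_type, Fintype.sum_prod_type]
    congr 1
    · calc ∑ a : A, ∑ b : B, |p a - q a| * r b
          = ∑ a : A, |p a - q a| * ∑ b, r b := by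
            apply Finset.sum_congr rfl; intro a _; rw [Finset.mul_sum]
        _ = ∑ a : A, |p a - q a| := by simp [hr1]
    · calc ∑ a : A, ∑ b : B, q a * |r b - s b|
          = ∑ a : A, q a * ∑ b, |r b - s b| := by
            apply Finset.sum_congr rfl; intro a _; rw [Finset.mul_sum]
        _ = ∑ b, |r b - s b| := by rw [← Finset.sum_mul, hq1, one_mul]
  rw [hEq] at hsum
  linarith

lemma rb_tv_comp_equiv {α β : Type*} [Fintype α] [Fintype β] (e : α ≃ β) (p q : β → ℝ) :
    tvDist (fun a => p (e a)) (fun a => q (e a)) = tvDist p q := by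
  simp only [tvDist]
  congr 1
  exact Equiv.sum_comp e (fun b => |p b - q b|)

end aux

set_option maxHeartbeats 2000000 in
/-- Lemma 1: for two independent sources, each randomly and uniformly binned
into two indices, the expected total variation distance between the induced distribution of
the bins and the uniform distribution is bounded via the sets `D_{γ_j}`. -/
theorem random_binning_tv_bound {X1 X2 : Type} [Fintype X1] [Fintype X2]
    (p1 : X1 → ℝ) (p2 : X2 → ℝ) (h1 : IsPMF p1) (h2 : IsPMF p2)
    (W1 F1 W2 F2 : ℕ) (hW1 : 0 < W1) (hF1 : 0 < F1) (hW2 : 0 < W2) (hF2 : 0 < F2)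
    (γ1 γ2 : ℝ) (hγ1 : 0 < γ1) (hγ2 : 0 < γ2) :
    (1 / (Fintype.card ((X1 → Fin W1 × Fin F1) × (X2 → Fin W2 × Fin F2)) : ℝ)) *
        ∑ b : (X1 → Fin W1 × Fin F1) × (X2 → Fin W2 × Fin F2),
          tvDist
            (fun wf : (Fin W1 × Fin W2) × Fin F1 × Fin F2 =>
              ∑ x ∈ Finset.univ.filter (fun x : X1 × X2 =>
                  b.1 x.1 = (wf.1.1, wf.2.1) ∧ b.2 x.2 = (wf.1.2, wf.2.2)),
                p1 x.1 * p2 x.2)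
            (fun _ : (Fin W1 × Fin W2) × Fin F1 × Fin F2 =>
              1 / ((W1 * W2 * F1 * F2 : ℕ) : ℝ))
      ≤ ((∑ x ∈ Finset.univ.filter (fun x : X1 => ¬ γ1 < Real.logb 2 (1 / p1 x)), p1 x)
            + (1 / 2) * Real.sqrt (((W1 * F1 : ℕ) : ℝ) * (2 : ℝ) ^ (-γ1)))
        + ((∑ x ∈ Finset.univ.filter (fun x : X2 => ¬ γ2 < Real.logb 2 (1 / p2 x)), p2 x)
            + (1 / 2) * Real.sqrt (((W2 * F2 : ℕ) : ℝ) * (2 : ℝ) ^ (-γ2))) := by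
  classical
  obtain ⟨hp10, hp11⟩ := h1
  obtain ⟨hp20, hp21⟩ := h2
  haveI : NeZero W1 := ⟨hW1.ne'⟩
  haveI : NeZero F1 := ⟨hF1.ne'⟩
  haveI : NeZero W2 := ⟨hW2.ne'⟩
  haveI : NeZero F2 := ⟨hF2.ne'⟩
  set A1 := (Fin W1 × Fin F1) with hA1
  set A2 := (Fin W2 × Fin F2) with hA2
  have hcard1 : Fintype.card A1 = W1 * F1 := by simp [hA1]
  have hcard2 : Fintype.card A2 = W2 * F2 := by simp [hA2]
  have hcard1R : (Fintype.card A1 : ℝ) = ((W1 * F1 : ℕ) : ℝ) := by rw [hcard1]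
  have hcard2R : (Fintype.card A2 : ℝ) = ((W2 * F2 : ℕ) : ℝ) := by rw [hcard2]
  have hN1 : (0:ℝ) < Fintype.card A1 := by exact_mod_cast Fintype.card_pos
  have hN2 : (0:ℝ) < Fintype.card A2 := by exact_mod_cast Fintype.card_pos
  set P1 : (X1 → A1) → A1 → ℝ :=
    fun b1 a => ∑ x ∈ Finset.univ.filter (fun x => b1 x = a), p1 x with hP1
  set P2 : (X2 → A2) → A2 → ℝ :=
    fun b2 a => ∑ x ∈ Finset.univ.filter (fun x => b2 x = a), p2 x with hP2
  have hP2sum : ∀ b2 : X2 → A2, ∑ a, P2 b2 a = 1 := by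
    intro b2
    rw [hP2, ← hp21]
    exact Finset.sum_fiberwise_of_maps_to (fun x _ => Finset.mem_univ (b2 x)) p2
  have hP20 : ∀ (b2 : X2 → A2) a, 0 ≤ P2 b2 a :=
    fun b2 a => Finset.sum_nonneg fun x _ => hp20 x
  have hu10 : ∀ a : A1, (0:ℝ) ≤ 1 / (Fintype.card A1 : ℝ) := fun _ => by positivity
  have hu1sum : ∑ _a : A1, (1:ℝ) / (Fintype.card A1 : ℝ) = 1 := by
    rw [Finset.sum_const, Finset.card_univ, nsmul_eq_mul]
    field_simp
  -- per-binning bound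
  have hbound : ∀ b : (X1 → A1) × (X2 → A2),
      tvDist
        (fun wf : (Fin W1 × Fin W2) × Fin F1 × Fin F2 =>
          ∑ x ∈ Finset.univ.filter (fun x : X1 × X2 =>
              b.1 x.1 = (wf.1.1, wf.2.1) ∧ b.2 x.2 = (wf.1.2, wf.2.2)),
            p1 x.1 * p2 x.2)
        (fun _ : (Fin W1 × Fin W2) × Fin F1 × Fin F2 =>
          1 / ((W1 * W2 * F1 * F2 : ℕ) : ℝ))
      ≤ tvDist (P1 b.1) (fun _ : A1 => 1 / (Fintype.card A1 : ℝ))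
        + tvDist (P2 b.2) (fun _ : A2 => 1 / (Fintype.card A2 : ℝ)) := by
    intro b
    have hfac : ∀ wf : (Fin W1 × Fin W2) × Fin F1 × Fin F2,
        (∑ x ∈ Finset.univ.filter (fun x : X1 × X2 =>
            b.1 x.1 = (wf.1.1, wf.2.1) ∧ b.2 x.2 = (wf.1.2, wf.2.2)),
          p1 x.1 * p2 x.2)
        = P1 b.1 (wf.1.1, wf.2.1) * P2 b.2 (wf.1.2, wf.2.2) := by
      intro wf
      have hfilter : Finset.univ.filter (fun x : X1 × X2 =>
            b.1 x.1 = (wf.1.1, wf.2.1) ∧ b.2 x.2 = (wf.1.2, wf.2.2))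
          = (Finset.univ.filter (fun x1 => b.1 x1 = (wf.1.1, wf.2.1)))
            ×ˢ (Finset.univ.filter (fun x2 => b.2 x2 = (wf.1.2, wf.2.2))) := by
        ext x
        simp only [Finset.mem_filter, Finset.mem_product, Finset.mem_univ, true_and]
      rw [hfilter, Finset.sum_product, hP1, hP2]
      simp only []
      rw [← Finset.sum_mul_sum]
    have hconst : (1:ℝ) / ((W1 * W2 * F1 * F2 : ℕ) : ℝ)
        = (1 / (Fintype.card A1 : ℝ)) * (1 / (Fintype.card A2 : ℝ)) := by
      rw [hcard1R, hcard2R, div_mul_div_comm, one_mul]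
      congr 1
      push_cast
      ring
    set e := Equiv.prodProdProdComm (Fin W1) (Fin F1) (Fin W2) (Fin F2) with he
    -- e : (W1×F1)×(W2×F2) ≃ (W1×W2)×(F1×F2)
    have heq : tvDist
        (fun wf : (Fin W1 × Fin W2) × Fin F1 × Fin F2 =>
          ∑ x ∈ Finset.univ.filter (fun x : X1 × X2 =>
              b.1 x.1 = (wf.1.1, wf.2.1) ∧ b.2 x.2 = (wf.1.2, wf.2.2)),
            p1 x.1 * p2 x.2)
        (fun _ : (Fin W1 × Fin W2) × Fin F1 × Fin F2 =>
          1 / ((W1 * W2 * F1 * F2 : ℕ) : ℝ))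
        = tvDist (fun y : A1 × A2 => P1 b.1 y.1 * P2 b.2 y.2)
            (fun _ : A1 × A2 =>
              (1 / (Fintype.card A1 : ℝ)) * (1 / (Fintype.card A2 : ℝ))) := by
      rw [← rb_tv_comp_equiv e
        (fun wf : (Fin W1 × Fin W2) × Fin F1 × Fin F2 =>
          ∑ x ∈ Finset.univ.filter (fun x : X1 × X2 =>
              b.1 x.1 = (wf.1.1, wf.2.1) ∧ b.2 x.2 = (wf.1.2, wf.2.2)),
            p1 x.1 * p2 x.2)
        (fun _ => 1 / ((W1 * W2 * F1 * F2 : ℕ) : ℝ))]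
      congr 1
      · funext y
        obtain ⟨⟨y11, y12⟩, y21, y22⟩ := y
        rw [hfac]
        simp only [he]
        rfl
      · funext y
        rw [hconst]
    rw [heq]
    exact rb_tv_prod (P1 b.1) (fun _ => 1 / (Fintype.card A1 : ℝ))
      (P2 b.2) (fun _ => 1 / (Fintype.card A2 : ℝ))
      (hP20 b.2) (hP2sum b.2) (hu10) (hu1sum)
  -- averaging over the (independent) binnings
  set M1 := Fintype.card (X1 → A1) with hM1
  set M2 := Fintype.card (X2 → A2) with hM2
  have hM10 : (0:ℝ) < M1 := by exact_mod_cast Fintype.card_pos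
  have hM20 : (0:ℝ) < M2 := by exact_mod_cast Fintype.card_pos
  have hcardprod : (Fintype.card ((X1 → A1) × (X2 → A2)) : ℝ) = (M1 : ℝ) * M2 := by
    rw [Fintype.card_prod, hM1, hM2]; push_cast; ring
  have havg : (1 / (Fintype.card ((X1 → A1) × (X2 → A2)) : ℝ)) *
        ∑ b : (X1 → A1) × (X2 → A2),
          (tvDist (P1 b.1) (fun _ : A1 => 1 / (Fintype.card A1 : ℝ))
            + tvDist (P2 b.2) (fun _ : A2 => 1 / (Fintype.card A2 : ℝ)))
      = (1 / (M1:ℝ)) * ∑ b1 : X1 → A1,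
          tvDist (P1 b1) (fun _ : A1 => 1 / (Fintype.card A1 : ℝ))
        + (1 / (M2:ℝ)) * ∑ b2 : X2 → A2,
          tvDist (P2 b2) (fun _ : A2 => 1 / (Fintype.card A2 : ℝ)) := by
    rw [hcardprod, Fintype.sum_prod_type]
    have expand : ∑ b1 : X1 → A1, ∑ b2 : X2 → A2,
        (tvDist (P1 b1) (fun _ : A1 => 1 / (Fintype.card A1 : ℝ))
          + tvDist (P2 b2) (fun _ : A2 => 1 / (Fintype.card A2 : ℝ)))
        = (M2:ℝ) * (∑ b1 : X1 → A1,
            tvDist (P1 b1) (fun _ : A1 => 1 / (Fintype.card A1 : ℝ)))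
          + (M1:ℝ) * ∑ b2 : X2 → A2,
            tvDist (P2 b2) (fun _ : A2 => 1 / (Fintype.card A2 : ℝ)) := by
      calc ∑ b1 : X1 → A1, ∑ b2 : X2 → A2,
          (tvDist (P1 b1) (fun _ : A1 => 1 / (Fintype.card A1 : ℝ))
            + tvDist (P2 b2) (fun _ : A2 => 1 / (Fintype.card A2 : ℝ)))
          = ∑ b1 : X1 → A1, ((M2:ℝ) * tvDist (P1 b1) (fun _ : A1 => 1 / (Fintype.card A1 : ℝ))
            + ∑ b2 : X2 → A2, tvDist (P2 b2) (fun _ : A2 => 1 / (Fintype.card A2 : ℝ))) := by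
            apply Finset.sum_congr rfl
            intro b1 _
            rw [Finset.sum_add_distrib, Finset.sum_const, Finset.card_univ, nsmul_eq_mul,
              ← hM2]
        _ = _ := by
            rw [Finset.sum_add_distrib, ← Finset.mul_sum, Finset.sum_const, Finset.card_univ,
              nsmul_eq_mul, ← hM1]
    rw [expand]
    field_simp
  -- one-source bounds
  have hγ1pos : (0:ℝ) < (2:ℝ) ^ (-γ1) := Real.rpow_pos_of_pos (by norm_num) _
  have hγ2pos : (0:ℝ) < (2:ℝ) ^ (-γ2) := Real.rpow_pos_of_pos (by norm_num) _
  have hD1 : ∀ x, (γ1 < Real.logb 2 (1 / p1 x)) → p1 x ≤ (2:ℝ) ^ (-γ1) := by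
    intro x hx
    rcases eq_or_lt_of_le (hp10 x) with h0 | h0
    · rw [← h0]; exact hγ1pos.le
    · have hinv : (0:ℝ) < 1 / p1 x := by positivity
      have := (Real.lt_logb_iff_rpow_lt (by norm_num) hinv).mp hx
      rw [Real.rpow_neg (by norm_num)]
      rw [lt_div_iff₀ h0] at this
      have h2γ : (0:ℝ) < (2:ℝ) ^ γ1 := Real.rpow_pos_of_pos (by norm_num) _
      rw [inv_eq_one_div, le_div_iff₀ h2γ]
      nlinarith [this]
  have hD2 : ∀ x, (γ2 < Real.logb 2 (1 / p2 x)) → p2 x ≤ (2:ℝ) ^ (-γ2) := by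
    intro x hx
    rcases eq_or_lt_of_le (hp20 x) with h0 | h0
    · rw [← h0]; exact hγ2pos.le
    · have hinv : (0:ℝ) < 1 / p2 x := by positivity
      have := (Real.lt_logb_iff_rpow_lt (by norm_num) hinv).mp hx
      rw [Real.rpow_neg (by norm_num)]
      rw [lt_div_iff₀ h0] at this
      have h2γ : (0:ℝ) < (2:ℝ) ^ γ2 := Real.rpow_pos_of_pos (by norm_num) _
      rw [inv_eq_one_div, le_div_iff₀ h2γ]
      nlinarith [this]
  have hone1 := rb_one_source (A := A1) p1 hp10 hp11 γ1 hγ1pos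
    (fun x => γ1 < Real.logb 2 (1 / p1 x)) hD1
  have hone2 := rb_one_source (A := A2) p2 hp20 hp21 γ2 hγ2pos
    (fun x => γ2 < Real.logb 2 (1 / p2 x)) hD2
  rw [← hcard1R, ← hcard2R]
  calc (1 / (Fintype.card ((X1 → A1) × (X2 → A2)) : ℝ)) *
        ∑ b : (X1 → A1) × (X2 → A2),
          tvDist
            (fun wf : (Fin W1 × Fin W2) × Fin F1 × Fin F2 =>
              ∑ x ∈ Finset.univ.filter (fun x : X1 × X2 =>
                  b.1 x.1 = (wf.1.1, wf.2.1) ∧ b.2 x.2 = (wf.1.2, wf.2.2)),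
                p1 x.1 * p2 x.2)
            (fun _ : (Fin W1 × Fin W2) × Fin F1 × Fin F2 =>
              1 / ((W1 * W2 * F1 * F2 : ℕ) : ℝ))
      ≤ (1 / (Fintype.card ((X1 → A1) × (X2 → A2)) : ℝ)) *
        ∑ b : (X1 → A1) × (X2 → A2),
          (tvDist (P1 b.1) (fun _ : A1 => 1 / (Fintype.card A1 : ℝ))
            + tvDist (P2 b.2) (fun _ : A2 => 1 / (Fintype.card A2 : ℝ))) := by
        apply mul_le_mul_of_nonneg_left (Finset.sum_le_sum fun b _ => hbound b)
        positivity
    _ = _ + _ := havg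
    _ ≤ _ := add_le_add hone1 hone2
end

section
/- Let (U,X) be a pair of random variables with joint pmf p_{UX} on a finite alphabet 𝒰×𝒳 with p_{UX}(u,x) > 0 for all (u,x), |𝒰| ≥ 2, and let ε > 0. Then there exists β > 0 such that for all n ≥ 1, all μ ∈ [0:n], and every subset S ⊆ [1:n] with |S| = μ, if (U₁,X₁), …, (U_n,X_n) are i.i.d. copies of (U,X), then P( Σ_{k∈S} log(1/p_{U|X}(U_k|X_k)) + Σ_{k∉S} log(1/p_U(U_k)) ≤ (1−ε)·[ μ·H(U|X) + (n−μ)·H(U) ] ) ≤ exp(−βn). -/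
open Finset Real Filter

attribute [local instance] Classical.propDecidable

lemma aux_exp_neg_le (y : ℝ) (hy : 0 ≤ y) : Real.exp (-y) ≤ 1 - y + y^2 := by
  have h1 : y + 1 ≤ Real.exp y := Real.add_one_le_exp y
  have h3 : Real.exp (-y) * Real.exp y = 1 := by rw [← Real.exp_add]; simp
  have h4 : Real.exp (-y) * (y + 1) ≤ 1 := by
    nlinarith [Real.exp_pos (-y)]
  nlinarith [Real.exp_pos (-y), mul_nonneg (mul_nonneg hy hy) hy]

lemma aux_mgf {α : Type*} [Fintype α] (p f : α → ℝ) (hp0 : ∀ a, 0 ≤ p a) (hp1 : ∑ a, p a = 1)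
    (hf0 : ∀ a, 0 ≤ f a) (B : ℝ) (hB : ∀ a, f a ≤ B) (t : ℝ) (ht : 0 ≤ t) :
    ∑ a, p a * Real.exp (-(t * f a)) ≤ Real.exp (-(t * ∑ a, p a * f a) + t^2 * B^2) := by
  have key : ∀ a, Real.exp (-(t * f a)) ≤ 1 - t * f a + t^2 * B^2 := by
    intro a
    have h1 := aux_exp_neg_le (t * f a) (mul_nonneg ht (hf0 a))
    have h2 : (t * f a)^2 ≤ t^2 * B^2 := by
      calc (t * f a)^2 = t^2 * (f a)^2 := by ring
        _ ≤ t^2 * B^2 := mul_le_mul_of_nonneg_left (by nlinarith [hf0 a, hB a]) (sq_nonneg t)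
    linarith
  have step : ∑ a, p a * Real.exp (-(t * f a)) ≤ 1 - t * (∑ a, p a * f a) + t^2 * B^2 := by
    calc ∑ a, p a * Real.exp (-(t * f a)) ≤ ∑ a, p a * (1 - t * f a + t^2 * B^2) :=
          Finset.sum_le_sum fun a _ => mul_le_mul_of_nonneg_left (key a) (hp0 a)
      _ = ∑ a, (p a * (1 + t^2 * B^2) - t * (p a * f a)) :=
          Finset.sum_congr rfl fun a _ => by ring
      _ = (∑ a, p a) * (1 + t^2 * B^2) - t * ∑ a, p a * f a := by
          rw [Finset.sum_sub_distrib, Finset.sum_mul, Finset.mul_sum]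
      _ = 1 - t * (∑ a, p a * f a) + t^2 * B^2 := by rw [hp1]; ring
  have := Real.add_one_le_exp (-(t * ∑ a, p a * f a) + t^2 * B^2)
  linarith

section auxEntropy

variable {U X : Type} [Fintype U] [Fintype X]

lemma HOf_fst_eq [Nonempty X] (p : U × X → ℝ) :
    HOf p Prod.fst = -∑ u, (∑ x, p (u, x)) * Real.logb 2 (∑ x, p (u, x)) := by
  have himg : (Finset.univ.image (Prod.fst : U × X → U)) = Finset.univ :=
    Finset.eq_univ_iff_forall.mpr fun u =>
      Finset.mem_image.mpr ⟨(u, Classical.arbitrary X), Finset.mem_univ _, rfl⟩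
  unfold HOf
  rw [himg]
  refine neg_inj.mpr (Finset.sum_congr rfl fun u _ => ?_)
  have hq : ∑ a ∈ Finset.univ.filter (fun a : U × X => a.1 = u), p a = ∑ x, p (u, x) := by
    rw [Finset.sum_filter, Fintype.sum_prod_type]
    rw [Finset.sum_eq_single u (fun b _ hb => by simp [hb]) (by simp)]
    simp
  show (∑ a ∈ Finset.univ.filter (fun a : U × X => a.1 = u), p a) *
      Real.logb 2 (∑ a ∈ Finset.univ.filter (fun a : U × X => a.1 = u), p a) = _
  rw [hq]

lemma HOf_snd_eq [Nonempty U] (p : U × X → ℝ) :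
    HOf p Prod.snd = -∑ x, (∑ u, p (u, x)) * Real.logb 2 (∑ u, p (u, x)) := by
  have himg : (Finset.univ.image (Prod.snd : U × X → X)) = Finset.univ :=
    Finset.eq_univ_iff_forall.mpr fun x =>
      Finset.mem_image.mpr ⟨(Classical.arbitrary U, x), Finset.mem_univ _, rfl⟩
  unfold HOf
  rw [himg]
  refine neg_inj.mpr (Finset.sum_congr rfl fun x _ => ?_)
  have hq : ∑ a ∈ Finset.univ.filter (fun a : U × X => a.2 = x), p a = ∑ u, p (u, x) := by
    rw [Finset.sum_filter, Fintype.sum_prod_type_right]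
    rw [Finset.sum_eq_single x (fun b _ hb => by simp [hb]) (by simp)]
    simp
  show (∑ a ∈ Finset.univ.filter (fun a : U × X => a.2 = x), p a) *
      Real.logb 2 (∑ a ∈ Finset.univ.filter (fun a : U × X => a.2 = x), p a) = _
  rw [hq]

lemma HOf_inj {A B : Type*} [Fintype A] (p : A → ℝ) (f : A → B) (hf : Function.Injective f) :
    HOf p f = -∑ a, p a * Real.logb 2 (p a) := by
  unfold HOf
  rw [Finset.sum_image (fun x _ y _ h => hf h)]
  refine neg_inj.mpr (Finset.sum_congr rfl fun a _ => ?_)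
  have hq : ∑ b ∈ Finset.univ.filter (fun b => f b = f a), p b = p a := by
    rw [Finset.sum_filter,
      Finset.sum_eq_single a (fun b _ hb => if_neg (fun h => hb (hf h)))
        (fun h => absurd (Finset.mem_univ a) h)]
    simp
  rw [hq]

lemma HOf_pair_eq (p : U × X → ℝ) :
    HOf p (fun a => (Prod.fst a, Prod.snd a)) = -∑ a, p a * Real.logb 2 (p a) :=
  HOf_inj p _ (fun a b h => by
    have h1 : a.1 = b.1 := congrArg Prod.fst h
    have h2 : a.2 = b.2 := congrArg Prod.snd h
    exact Prod.ext h1 h2)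

lemma aux_Eh_eq [Nonempty X] (p : U × X → ℝ) :
    ∑ a : U × X, p a * Real.logb 2 (1 / ∑ x, p (a.1, x)) = HOf p Prod.fst := by
  rw [HOf_fst_eq]
  rw [Fintype.sum_prod_type]
  rw [← Finset.sum_neg_distrib]
  refine Finset.sum_congr rfl fun u _ => ?_
  dsimp only
  rw [← Finset.sum_mul, one_div, Real.logb_inv]
  ring

lemma aux_Eg_eq [Nonempty U] [Nonempty X] (p : U × X → ℝ) (hpos : ∀ a, 0 < p a) :
    ∑ a : U × X, p a * Real.logb 2 (1 / (p a / ∑ u, p (u, a.2)))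
      = condHOf p Prod.fst Prod.snd := by
  have hX : ∀ x : X, 0 < ∑ u, p (u, x) := fun x =>
    Finset.sum_pos (fun u _ => hpos _) Finset.univ_nonempty
  unfold condHOf
  rw [HOf_pair_eq, HOf_snd_eq]
  have hterm : ∀ a : U × X, p a * Real.logb 2 (1 / (p a / ∑ u, p (u, a.2)))
      = p a * Real.logb 2 (∑ u, p (u, a.2)) - p a * Real.logb 2 (p a) := by
    intro a
    rw [one_div_div, Real.logb_div (ne_of_gt (hX a.2)) (ne_of_gt (hpos a))]
    ring
  rw [Finset.sum_congr rfl fun a _ => hterm a, Finset.sum_sub_distrib]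
  have e1 : ∑ a : U × X, p a * Real.logb 2 (∑ u, p (u, a.2))
      = ∑ x, (∑ u, p (u, x)) * Real.logb 2 (∑ u, p (u, x)) := by
    rw [Fintype.sum_prod_type_right]
    exact Finset.sum_congr rfl fun x _ => by dsimp only; rw [← Finset.sum_mul]
  rw [e1]
  ring

end auxEntropy

set_option maxHeartbeats 2000000 in
/-- for an i.i.d. source of pairs `(U,X)` with full-support joint pmf and
`|𝒰| ≥ 2`, the probability that the mixed empirical self-information (conditional on
positions in `S`, marginal elsewhere) falls below `(1-ε)[μH(U|X) + (n-μ)H(U)]` decays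
exponentially in `n`, uniformly over `n`, `μ` and subsets `S` of size `μ`. -/
theorem mixed_self_information_large_deviation {U X : Type} [Fintype U] [Fintype X]
    (p : U × X → ℝ) (hp : IsPMF p) (hpos : ∀ ux, 0 < p ux) (hcard : 2 ≤ Fintype.card U)
    (ε : ℝ) (hε : 0 < ε) :
    ∃ β > 0, ∀ n ≥ 1, ∀ μ ≤ n, ∀ S : Finset (Fin n), S.card = μ →
      ∑ z ∈ Finset.univ.filter (fun z : Fin n → U × X =>
          (∑ k ∈ S, Real.logb 2 (1 / (p (z k) / ∑ u, p (u, (z k).2))))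
            + (∑ k ∈ Sᶜ, Real.logb 2 (1 / ∑ x, p ((z k).1, x)))
          ≤ (1 - ε) * ((μ : ℝ) * condHOf p Prod.fst Prod.snd
              + ((n - μ : ℕ) : ℝ) * HOf p Prod.fst)),
        ∏ k, p (z k)
      ≤ Real.exp (-β * n) := by

  classical
  obtain ⟨hp0, hp1⟩ := hp
  haveI hNU : Nonempty U := Fintype.card_pos_iff.mp (by omega)
  haveI hNX : Nonempty X := by
    by_contra hX
    rw [not_nonempty_iff] at hX
    rw [Fintype.sum_prod_type] at hp1
    simp at hp1
  -- basic positivity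
  have hpUpos : ∀ u, (0:ℝ) < ∑ x, p (u, x) := fun u =>
    Finset.sum_pos (fun x _ => hpos _) Finset.univ_nonempty
  have hpXpos : ∀ x, (0:ℝ) < ∑ u, p (u, x) := fun x =>
    Finset.sum_pos (fun u _ => hpos _) Finset.univ_nonempty
  have hsum_pU : ∑ u, ∑ x, p (u, x) = 1 := by rw [← Fintype.sum_prod_type]; exact hp1
  have hpUlt : ∀ u, (∑ x, p (u, x)) < 1 := by
    intro u
    obtain ⟨u', hu'⟩ := Fintype.exists_ne_of_one_lt_card (by omega) u
    have h1 := Finset.add_sum_erase Finset.univ (fun v => ∑ x, p (v, x)) (Finset.mem_univ u)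
    rw [hsum_pU] at h1
    have h2 : 0 < ∑ v ∈ Finset.univ.erase u, (∑ x, p (v, x)) :=
      Finset.sum_pos' (fun i _ => (hpUpos i).le)
        ⟨u', Finset.mem_erase.mpr ⟨hu', Finset.mem_univ _⟩, hpUpos u'⟩
    linarith
  have hplt : ∀ a : U × X, p a < ∑ u, p (u, a.2) := by
    intro a
    obtain ⟨u', hu'⟩ := Fintype.exists_ne_of_one_lt_card (by omega) a.1
    have h1 := Finset.add_sum_erase Finset.univ (fun v => p (v, a.2)) (Finset.mem_univ a.1)
    have h2 : 0 < ∑ v ∈ Finset.univ.erase a.1, p (v, a.2) :=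
      Finset.sum_pos' (fun i _ => (hpos _).le)
        ⟨u', Finset.mem_erase.mpr ⟨hu', Finset.mem_univ _⟩, hpos _⟩
    have h3 : p a = p (a.1, a.2) := rfl
    linarith
  -- the two self-information functions
  set G : U × X → ℝ := fun a => Real.logb 2 (1 / (p a / ∑ u, p (u, a.2))) with hGdef
  set Hh : U × X → ℝ := fun a => Real.logb 2 (1 / ∑ x, p (a.1, x)) with hHdef
  have hGpos : ∀ a, 0 < G a := by
    intro a
    have hq : 0 < p a / ∑ u, p (u, a.2) := div_pos (hpos a) (hpXpos a.2)
    have hlt : p a / (∑ u, p (u, a.2)) < 1 := (div_lt_one (hpXpos a.2)).mpr (hplt a)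
    exact Real.logb_pos one_lt_two ((one_lt_div hq).mpr hlt)
  have hHpos : ∀ a, 0 < Hh a := by
    intro a
    exact Real.logb_pos one_lt_two ((one_lt_div (hpUpos a.1)).mpr (hpUlt a.1))
  set Eg : ℝ := ∑ a, p a * G a with hEgdef
  set Eh : ℝ := ∑ a, p a * Hh a with hEhdef
  have hEgpos : 0 < Eg :=
    Finset.sum_pos (fun a _ => mul_pos (hpos a) (hGpos a)) Finset.univ_nonempty
  have hEhpos : 0 < Eh :=
    Finset.sum_pos (fun a _ => mul_pos (hpos a) (hHpos a)) Finset.univ_nonempty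
  obtain ⟨a0⟩ : Nonempty (U × X) := inferInstance
  set B : ℝ := (Finset.univ.sup' Finset.univ_nonempty (fun a : U × X => max (G a) (Hh a))) + 1
    with hBdef
  have hsupB : ∀ a : U × X, max (G a) (Hh a) ≤ B := by
    intro a
    have := Finset.le_sup' (fun a : U × X => max (G a) (Hh a)) (Finset.mem_univ a)
    rw [hBdef]; linarith
  have hGB : ∀ a, G a ≤ B := fun a => le_trans (le_max_left _ _) (hsupB a)
  have hHB : ∀ a, Hh a ≤ B := fun a => le_trans (le_max_right _ _) (hsupB a)
  have hBpos : 0 < B := lt_of_lt_of_le (hGpos a0) (hGB a0)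
  set m : ℝ := min Eg Eh with hmdef
  have hmpos : 0 < m := lt_min hEgpos hEhpos
  set t : ℝ := ε * m / (2 * B^2) with htdef
  have htpos : 0 < t := by rw [htdef]; positivity
  refine ⟨ε^2 * m^2 / (4 * B^2), by positivity, ?_⟩
  intro n hn μ hμ S hS
  -- identities with entropies
  have hcond : condHOf p Prod.fst Prod.snd = Eg := (aux_Eg_eq p hpos).symm
  have hHf : HOf p Prod.fst = Eh := (aux_Eh_eq p).symm
  set ν : ℝ := ((n - μ : ℕ) : ℝ) with hνdef
  set c : ℝ := (1 - ε) * ((μ : ℝ) * Eg + ν * Eh) with hcdef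
  set F : Fin n → (U × X) → ℝ := fun k a => if k ∈ S then G a else Hh a with hFdef
  have hF0 : ∀ k a, 0 ≤ F k a := by
    intro k a
    rw [hFdef]
    by_cases hk : k ∈ S
    · simp [hk]; exact (hGpos a).le
    · simp [hk]; exact (hHpos a).le
  have hFB : ∀ k, ∀ a, F k a ≤ B := by
    intro k a
    rw [hFdef]
    by_cases hk : k ∈ S
    · simp [hk]; exact hGB a
    · simp [hk]; exact hHB a
  set EF : Fin n → ℝ := fun k => ∑ a, p a * F k a with hEFdef
  have hsumEF : ∑ k, EF k = (μ : ℝ) * Eg + ν * Eh := by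
    rw [← Finset.sum_add_sum_compl S]
    have h1 : ∑ k ∈ S, EF k = (μ : ℝ) * Eg := by
      rw [Finset.sum_congr rfl (fun k hk => show EF k = Eg by
        rw [hEFdef]; dsimp only; rw [hEgdef]
        exact Finset.sum_congr rfl fun a _ => by rw [hFdef]; simp [hk])]
      rw [Finset.sum_const, hS, nsmul_eq_mul]
    have h2 : ∑ k ∈ Sᶜ, EF k = ν * Eh := by
      rw [Finset.sum_congr rfl (fun k hk => show EF k = Eh by
        rw [hEFdef]; dsimp only; rw [hEhdef]
        exact Finset.sum_congr rfl fun a _ => by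
          rw [hFdef]; simp [Finset.mem_compl.mp hk])]
      rw [Finset.sum_const, Finset.card_compl, Fintype.card_fin, hS, nsmul_eq_mul, hνdef]
    rw [h1, h2]
  -- the event implies the linear bound
  have hevent : ∀ z : Fin n → U × X,
      z ∈ Finset.univ.filter (fun z : Fin n → U × X =>
          (∑ k ∈ S, Real.logb 2 (1 / (p (z k) / ∑ u, p (u, (z k).2))))
            + (∑ k ∈ Sᶜ, Real.logb 2 (1 / ∑ x, p ((z k).1, x)))
          ≤ (1 - ε) * ((μ : ℝ) * condHOf p Prod.fst Prod.snd
              + ((n - μ : ℕ) : ℝ) * HOf p Prod.fst)) →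
      ∑ k, F k (z k) ≤ c := by
    intro z hz
    have hz' := (Finset.mem_filter.mp hz).2
    rw [hcond, hHf] at hz'
    have e1 : ∑ k ∈ S, Real.logb 2 (1 / (p (z k) / ∑ u, p (u, (z k).2)))
        = ∑ k ∈ S, F k (z k) :=
      Finset.sum_congr rfl fun k hk => (if_pos hk).symm
    have e2 : ∑ k ∈ Sᶜ, Real.logb 2 (1 / ∑ x, p ((z k).1, x))
        = ∑ k ∈ Sᶜ, F k (z k) :=
      Finset.sum_congr rfl fun k hk => (if_neg (Finset.mem_compl.mp hk)).symm
    rw [e1, e2, Finset.sum_add_sum_compl S (fun k => F k (z k))] at hz'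
    exact hz'
  -- Chernoff bound
  calc ∑ z ∈ Finset.univ.filter (fun z : Fin n → U × X =>
          (∑ k ∈ S, Real.logb 2 (1 / (p (z k) / ∑ u, p (u, (z k).2))))
            + (∑ k ∈ Sᶜ, Real.logb 2 (1 / ∑ x, p ((z k).1, x)))
          ≤ (1 - ε) * ((μ : ℝ) * condHOf p Prod.fst Prod.snd
              + ((n - μ : ℕ) : ℝ) * HOf p Prod.fst)),
        ∏ k, p (z k)
      ≤ ∑ z ∈ Finset.univ.filter (fun z : Fin n → U × X =>
          (∑ k ∈ S, Real.logb 2 (1 / (p (z k) / ∑ u, p (u, (z k).2))))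
            + (∑ k ∈ Sᶜ, Real.logb 2 (1 / ∑ x, p ((z k).1, x)))
          ≤ (1 - ε) * ((μ : ℝ) * condHOf p Prod.fst Prod.snd
              + ((n - μ : ℕ) : ℝ) * HOf p Prod.fst)),
          (∏ k, p (z k)) * Real.exp (t * (c - ∑ k, F k (z k))) := by
        refine Finset.sum_le_sum fun z hz => ?_
        refine le_mul_of_one_le_right (Finset.prod_nonneg fun k _ => (hpos _).le) ?_
        exact Real.one_le_exp (mul_nonneg htpos.le (sub_nonneg.mpr (hevent z hz)))
    _ ≤ ∑ z : Fin n → U × X, (∏ k, p (z k)) * Real.exp (t * (c - ∑ k, F k (z k))) := by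
        refine Finset.sum_le_sum_of_subset_of_nonneg (Finset.filter_subset _ _) fun z _ _ =>
          mul_nonneg (Finset.prod_nonneg fun k _ => (hpos _).le) (Real.exp_nonneg _)
    _ = Real.exp (t * c) *
          ∑ z : Fin n → U × X, ∏ k, (p (z k) * Real.exp (-(t * F k (z k)))) := by
        rw [Finset.mul_sum]
        refine Finset.sum_congr rfl fun z _ => ?_
        have e1 : t * (c - ∑ k, F k (z k)) = t * c + ∑ k, -(t * F k (z k)) := by
          rw [Finset.sum_neg_distrib, ← Finset.mul_sum]; ring
        rw [e1, Real.exp_add, Real.exp_sum, Finset.prod_mul_distrib]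
        ring
    _ = Real.exp (t * c) * ∏ k, ∑ a, p a * Real.exp (-(t * F k a)) := by
        congr 1
        rw [Finset.prod_univ_sum (fun _ => Finset.univ)
          (fun k a => p a * Real.exp (-(t * F k a))), Fintype.piFinset_univ]
    _ ≤ Real.exp (t * c) * ∏ k, Real.exp (-(t * EF k) + t^2 * B^2) := by
        refine mul_le_mul_of_nonneg_left
          (Finset.prod_le_prod
            (fun k _ => Finset.sum_nonneg fun a _ => mul_nonneg (hp0 a) (Real.exp_nonneg _))
            (fun k _ => aux_mgf p (F k) hp0 hp1 (hF0 k) B (hFB k) t htpos.le))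
          (Real.exp_nonneg _)
    _ = Real.exp (t * c + ∑ k, (-(t * EF k) + t^2 * B^2)) := by
        rw [Real.exp_add, Real.exp_sum]
    _ ≤ Real.exp (-(ε^2 * m^2 / (4 * B^2)) * n) := by
        apply Real.exp_le_exp.mpr
        have hsum : ∑ k : Fin n, (-(t * EF k) + t^2 * B^2)
            = -(t * ((μ : ℝ) * Eg + ν * Eh)) + (n : ℝ) * (t^2 * B^2) := by
          rw [Finset.sum_add_distrib, Finset.sum_neg_distrib, ← Finset.mul_sum, hsumEF,
            Finset.sum_const, Finset.card_univ, Fintype.card_fin, nsmul_eq_mul]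
        rw [hsum, hcdef]
        have hν : ν = (n : ℝ) - (μ : ℝ) := by rw [hνdef, Nat.cast_sub hμ]
        have hMm : (n : ℝ) * m ≤ (μ : ℝ) * Eg + ν * Eh := by
          have h1 : m ≤ Eg := min_le_left _ _
          have h2 : m ≤ Eh := min_le_right _ _
          have hμ0 : (0:ℝ) ≤ (μ : ℝ) := Nat.cast_nonneg μ
          have hν0 : (0:ℝ) ≤ ν := by rw [hνdef]; exact Nat.cast_nonneg _
          nlinarith [hν]
        have hβ2 : t^2 * B^2 = ε^2 * m^2 / (4 * B^2) := by
          rw [htdef]; field_simp; ring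
        have hβ1 : t * ε * m = 2 * (ε^2 * m^2 / (4 * B^2)) := by
          rw [htdef]; field_simp; ring
        have h3 : t * ε * ((n : ℝ) * m) ≤ t * ε * ((μ : ℝ) * Eg + ν * Eh) :=
          mul_le_mul_of_nonneg_left hMm (by positivity)
        have hn0 : (0:ℝ) ≤ (n : ℝ) := Nat.cast_nonneg n
        nlinarith [h3, hβ1, hβ2, hn0]
end
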